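/- For every n-state direction-determinate graph-walking automaton A whose transitions are backward deterministic (reversible transition function), there exists a halting automaton B^R with 2n+1 states, obtained by adding a fresh non-reenterable initial state to the reversed automaton, whose transitions are reversible and whose computation on any finite graph is finite. -/

import Mathlib

attribute [local instance 10] Classical.propDecidable

/-- A signature: directions with an involutive opposite, node labels,
initial labels, and the set of directions allowed at each label. -/
structure Signature where
  Dir : Type
  neg : Dir → Dir
  neg_neg : ∀ d, neg (neg d) = d
  Lab : Type
  isInit : Lab → Bool
  dirs : Lab → Set Dir

/-- A finite graph over a signature. -/
structure SGraph (S : Signature) where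
  V : Type
  fin : Finite V
  v0 : V
  lab : V → S.Lab
  move : V → S.Dir → Option V
  move_inv : ∀ v d w, move v d = some w → move w (S.neg d) = some v
  move_defined : ∀ v d, (move v d).isSome ↔ d ∈ S.dirs (lab v)
  init_iff : ∀ v, S.isInit (lab v) = true ↔ v = v0

/-- A deterministic graph-walking automaton over a signature. -/
structure GWA (S : Signature) where
  Q : Type
  finQ : Finite Q
  q0 : Q
  F : Q → S.Lab → Bool
  δ : Q → S.Lab → Option (Q × S.Dir)
  δ_dir : ∀ q a p d, δ q a = some (p, d) → d ∈ S.dirs a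
  δ_not_F : ∀ q a, F q a = true → δ q a = none

namespace GWA

variable {S : Signature}

/-- One step of the computation, over an abstract node set with a move
function and a labelling. -/
def stepOn (A : GWA S) {V : Type} (move : V → S.Dir → Option V) (lab : V → S.Lab) :
    A.Q × V → Option (A.Q × V) := fun c =>
  if A.F c.1 (lab c.2) = true then none
  else match A.δ c.1 (lab c.2) with
    | none => none
    | some (p, d) => (move c.2 d).map fun w => (p, w)

/-- The configuration after `t` steps, starting from configuration `c`. -/
def runOn (A : GWA S) {V : Type} (move : V → S.Dir → Option V) (lab : V → S.Lab)
    (c : A.Q × V) : ℕ → Option (A.Q × V)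
  | 0 => some c
  | n + 1 => (runOn A move lab c n).bind (A.stepOn move lab)

def runFrom (A : GWA S) (G : SGraph S) (c : A.Q × G.V) : ℕ → Option (A.Q × G.V) :=
  A.runOn G.move G.lab c

/-- The computation of `A` on `G`, from the initial configuration. -/
def run (A : GWA S) (G : SGraph S) : ℕ → Option (A.Q × G.V) :=
  A.runFrom G (A.q0, G.v0)

def stateAt (A : GWA S) (G : SGraph S) (c : A.Q × G.V) (t : ℕ) : Option A.Q :=
  (A.runFrom G c t).map Prod.fst

def nodeAt (A : GWA S) (G : SGraph S) (c : A.Q × G.V) (t : ℕ) : Option G.V :=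
  (A.runFrom G c t).map Prod.snd

/-- The direction used by the transition taken at time `t`. -/
def dirAt (A : GWA S) (G : SGraph S) (c : A.Q × G.V) (t : ℕ) : Option S.Dir :=
  (A.runFrom G c t).bind fun x => (A.δ x.1 (G.lab x.2)).map Prod.snd

def Accepts (A : GWA S) (G : SGraph S) : Prop :=
  ∃ n c, A.run G n = some c ∧ A.F c.1 (G.lab c.2) = true

/-- A GWA is returning if it can accept only at the initial node. -/
def Returning (A : GWA S) : Prop :=
  ∀ q a, A.F q a = true → S.isInit a = true

/-- A GWA is halting if its computation on every (finite) graph is finite. -/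
def Halting (A : GWA S) : Prop :=
  ∀ G : SGraph S, ∃ n, A.run G n = none

/-- Direction-determinate: every state is entered in a unique direction. -/
def DirDet (A : GWA S) (d : A.Q → S.Dir) : Prop :=
  ∀ p a q d', A.δ p a = some (q, d') → d' = d q

/-- Backward determinism of the transition function. -/
def BackDet (A : GWA S) (d : A.Q → S.Dir) : Prop :=
  ∀ a q p1 p2, A.δ p1 a = some (q, d q) → A.δ p2 a = some (q, d q) → p1 = p2

/-- A reversible graph-walking automaton. -/
def Reversible (A : GWA S) : Prop :=
  (∃ d : A.Q → S.Dir, A.DirDet d ∧ A.BackDet d) ∧ A.Returning ∧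
    ∀ a q1 q2, A.F q1 a = true → A.F q2 a = true → q1 = q2

/-- The state `q` is entered via a transition in direction `d` taken during
the computation of `A` on `G`. -/
def EnteredVia (A : GWA S) (G : SGraph S) (d : S.Dir) (q : A.Q) : Prop :=
  ∃ t c, A.run G t = some c ∧ A.δ c.1 (G.lab c.2) = some (q, d)

end GWA

namespace GWA

variable {S : Signature}

lemma runOn_add (A : GWA S) {V : Type} (move : V → S.Dir → Option V) (lab : V → S.Lab)
    (c : A.Q × V) (a b : ℕ) :
    A.runOn move lab c (a + b) =
      (A.runOn move lab c a).bind (fun c' => A.runOn move lab c' b) := by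
  induction b with
  | zero =>
    cases h : A.runOn move lab c a <;> simp [runOn, h]
  | succ b ih =>
    have : a + (b + 1) = (a + b) + 1 := by omega
    rw [this, runOn, ih]
    cases h : A.runOn move lab c a with
    | none => rfl
    | some c' => simp [runOn]

lemma runOn_none_mono (A : GWA S) {V : Type} (move : V → S.Dir → Option V) (lab : V → S.Lab)
    (c : A.Q × V) {s t : ℕ} (hst : s ≤ t) (h : A.runOn move lab c s = none) :
    A.runOn move lab c t = none := by
  obtain ⟨k, rfl⟩ := Nat.exists_eq_add_of_le hst
  rw [runOn_add, h]
  rfl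

lemma stepOn_eq_some {A : GWA S} {V : Type} {move : V → S.Dir → Option V} {lab : V → S.Lab}
    {c e : A.Q × V} (h : A.stepOn move lab c = some e) :
    A.F c.1 (lab c.2) = false ∧
      ∃ dir, A.δ c.1 (lab c.2) = some (e.1, dir) ∧ move c.2 dir = some e.2 := by
  unfold stepOn at h
  split at h
  · exact absurd h (by simp)
  · rename_i hF
    refine ⟨by simpa using hF, ?_⟩
    split at h
    · exact absurd h (by simp)
    · rename_i p dir hδ
      rw [Option.map_eq_some_iff] at h
      obtain ⟨w, hw, he⟩ := h
      cases e
      injection he with h1 h2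
      subst h1; subst h2
      exact ⟨dir, hδ, hw⟩

end GWA

section Stmt3Aux

variable {S : Signature}

/-- The acceptance function of the reversed-with-fresh-initial automaton. -/
def BF (A : GWA S) : Option (A.Q ⊕ A.Q) → S.Lab → Bool
  | none, a => S.isInit a && A.F A.q0 a
  | some (Sum.inl q), a => A.F q a
  | some (Sum.inr _), _ => false

/-- The transition function: simulate `A` forward, but halt upon re-entering
the initial configuration (detected by the initial label). -/
noncomputable def Bδ (A : GWA S) :
    Option (A.Q ⊕ A.Q) → S.Lab → Option (Option (A.Q ⊕ A.Q) × S.Dir)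
  | none, a =>
      if S.isInit a = true then
        (A.δ A.q0 a).map (fun pd => (some (Sum.inl pd.1), pd.2))
      else none
  | some (Sum.inl q), a =>
      if q = A.q0 ∧ S.isInit a = true then none
      else (A.δ q a).map (fun pd => (some (Sum.inl pd.1), pd.2))
  | some (Sum.inr _), _ => none

lemma Bδ_inv {A : GWA S} {s : Option (A.Q ⊕ A.Q)} {a : S.Lab}
    {p : Option (A.Q ⊕ A.Q)} {dir : S.Dir} (h : Bδ A s a = some (p, dir)) :
    ∃ q p', p = some (Sum.inl p') ∧ A.δ q a = some (p', dir) ∧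
      ((s = none ∧ q = A.q0 ∧ S.isInit a = true) ∨
       (s = some (Sum.inl q) ∧ ¬(q = A.q0 ∧ S.isInit a = true))) := by
  match s with
  | none =>
    rw [Bδ] at h
    split at h
    · rename_i hinit
      rw [Option.map_eq_some_iff] at h
      obtain ⟨⟨p', dr⟩, hpd, he⟩ := h
      simp only [Prod.mk.injEq] at he
      obtain ⟨h1, h2⟩ := he
      subst h1; subst h2
      exact ⟨A.q0, p', rfl, hpd, Or.inl ⟨rfl, rfl, hinit⟩⟩
    · exact absurd h (by simp)
  | some (Sum.inl q) =>
    rw [Bδ] at h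
    split at h
    · exact absurd h (by simp)
    · rename_i hcond
      rw [Option.map_eq_some_iff] at h
      obtain ⟨⟨p', dr⟩, hpd, he⟩ := h
      simp only [Prod.mk.injEq] at he
      obtain ⟨h1, h2⟩ := he
      subst h1; subst h2
      exact ⟨q, p', rfl, hpd, Or.inr ⟨rfl, hcond⟩⟩
  | some (Sum.inr _) => exact absurd h (by simp [Bδ])

/-- The halting automaton. -/
noncomputable def Bof (A : GWA S) : GWA S where
  Q := Option (A.Q ⊕ A.Q)
  finQ := by
    have := A.finQ
    exact Finite.of_equiv _ (Equiv.optionEquivSumPUnit.{0,0} (A.Q ⊕ A.Q)).symm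
  q0 := none
  F := BF A
  δ := Bδ A
  δ_dir := by
    intro q a p dir h
    obtain ⟨q', p', rfl, hδ, _⟩ := Bδ_inv h
    exact A.δ_dir _ _ _ _ hδ
  δ_not_F := by
    intro q a hF
    match q with
    | none =>
      have hF' : (S.isInit a && A.F A.q0 a) = true := hF
      rw [Bool.and_eq_true] at hF'
      rw [Bδ, if_pos hF'.1, A.δ_not_F _ _ hF'.2]
      rfl
    | some (Sum.inl q') =>
      rw [Bδ]
      split
      · rfl
      · rw [A.δ_not_F _ _ hF]; rfl
    | some (Sum.inr _) => rfl

@[simp] lemma Bof_F (A : GWA S) : (Bof A).F = BF A := rfl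
@[simp] lemma Bof_δ (A : GWA S) : (Bof A).δ = Bδ A := rfl
@[simp] lemma Bof_q0 (A : GWA S) : (Bof A).q0 = none := rfl

/-- The direction assignment for `Bof`. -/
def dBof (A : GWA S) (d : A.Q → S.Dir) : Option (A.Q ⊕ A.Q) → S.Dir
  | none => d A.q0
  | some (Sum.inl q) => d q
  | some (Sum.inr q) => d q

lemma Bof_dirdet (A : GWA S) (d : A.Q → S.Dir) (hdd : A.DirDet d) :
    (Bof A).DirDet (dBof A d) := by
  intro p a q dir h
  obtain ⟨q', p', rfl, hδ, _⟩ := Bδ_inv h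
  simpa [dBof] using hdd _ _ _ _ hδ

lemma Bof_backdet (A : GWA S) (d : A.Q → S.Dir) (hdd : A.DirDet d) (hbd : A.BackDet d) :
    (Bof A).BackDet (dBof A d) := by
  intro a q p1 p2 h1 h2
  obtain ⟨q1, p', rfl, hδ1, hc1⟩ := Bδ_inv h1
  obtain ⟨q2, p'', heq, hδ2, hc2⟩ := Bδ_inv h2
  injection heq with heq
  injection heq with heq
  subst heq
  have hd1 : dBof A d (some (Sum.inl p')) = d p' := rfl
  rw [hd1] at hδ1 hδ2
  have hq : q1 = q2 := hbd _ _ _ _ hδ1 hδ2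
  subst hq
  rcases hc1 with ⟨rfl, hq0, hinit⟩ | ⟨rfl, hcond⟩ <;>
    rcases hc2 with ⟨rfl, hq0', hinit'⟩ | ⟨heq2, hcond'⟩
  · rfl
  · exact absurd ⟨hq0, hinit⟩ hcond'
  · exact absurd ⟨hq0', hinit'⟩ hcond
  · exact heq2.symm

end Stmt3Aux

section Stmt3Aux2

variable {S : Signature}

open GWA

lemma Bδ_none (A : GWA S) (a : S.Lab) :
    Bδ A none a =
      (if S.isInit a = true then
        (A.δ A.q0 a).map (fun pd => (some (Sum.inl pd.1), pd.2))
      else none) := rfl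

lemma Bδ_inl (A : GWA S) (q : A.Q) (a : S.Lab) :
    Bδ A (some (Sum.inl q)) a =
      (if q = A.q0 ∧ S.isInit a = true then none
      else (A.δ q a).map (fun pd => (some (Sum.inl pd.1), pd.2))) := rfl

/-- Backward simulation: every configuration of `Bof A` projects to one of `A`. -/
lemma sim_BA (A : GWA S) (G : SGraph S) :
    ∀ (t : ℕ) (c : (Bof A).Q × G.V), (Bof A).run G t = some c →
      ∃ q, A.run G t = some (q, c.2) ∧
        ((t = 0 ∧ c.1 = none ∧ q = A.q0) ∨ (t ≠ 0 ∧ c.1 = some (Sum.inl q))) := by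
  intro t
  induction t with
  | zero =>
    intro c hc
    have : (some ((none : Option (A.Q ⊕ A.Q)), G.v0) : Option ((Bof A).Q × G.V)) = some c := hc
    injection this with this
    subst this
    exact ⟨A.q0, rfl, Or.inl ⟨rfl, rfl, rfl⟩⟩
  | succ t ih =>
    intro c' hc'
    have hb : ((Bof A).run G t).bind ((Bof A).stepOn G.move G.lab) = some c' := hc'
    rw [Option.bind_eq_some_iff] at hb
    obtain ⟨c, hc, hstep⟩ := hb
    obtain ⟨q, hq, hcase⟩ := ih c hc
    obtain ⟨hF, dir, hδ, hmove⟩ := stepOn_eq_some hstep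
    obtain ⟨q', p', he1, hδA, hscase⟩ := Bδ_inv (hδ : Bδ A c.1 (G.lab c.2) = some (c'.1, dir))
    have hrun : A.run G (t + 1) = (A.run G t).bind (A.stepOn G.move G.lab) := rfl
    rcases hcase with ⟨ht0, hc1, hq0⟩ | ⟨ht, hc1⟩
    · -- t = 0, c.1 = none, q = A.q0
      rcases hscase with ⟨_, hq', hinit⟩ | ⟨habs, _⟩
      · subst hq'
        subst hq0
        have hFA : A.F A.q0 (G.lab c.2) = false := by
          have : (S.isInit (G.lab c.2) && A.F A.q0 (G.lab c.2)) = false := by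
            rw [hc1] at hF; exact hF
          rw [hinit] at this
          simpa using this
        refine ⟨p', ?_, Or.inr ⟨by omega, he1⟩⟩
        rw [hrun, hq]
        show A.stepOn G.move G.lab (A.q0, c.2) = some (p', c'.2)
        unfold GWA.stepOn
        simp only [hFA, hδA, hmove]
        simp
      · rw [hc1] at habs; exact absurd habs (by simp)
    · -- c.1 = some (Sum.inl q)
      rcases hscase with ⟨habs, _, _⟩ | ⟨heq, _⟩
      · rw [hc1] at habs; exact absurd habs (by simp)
      · rw [hc1] at heq
        injection heq with heq
        injection heq with heq
        subst heq
        have hFA : A.F q (G.lab c.2) = false := by rw [hc1] at hF; exact hF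
        refine ⟨p', ?_, Or.inr ⟨by omega, he1⟩⟩
        rw [hrun, hq]
        show A.stepOn G.move G.lab (q, c.2) = some (p', c'.2)
        unfold GWA.stepOn
        simp only [hFA, hδA, hmove]
        simp

/-- Forward simulation, as long as `A` has not returned to its initial
configuration. -/
lemma sim_AB (A : GWA S) (G : SGraph S) :
    ∀ t : ℕ, (∀ t', 1 ≤ t' → t' < t → A.run G t' ≠ some (A.q0, G.v0)) →
      (Bof A).run G t = (A.run G t).map
        (fun c => ((if t = 0 then none else some (Sum.inl c.1)), c.2)) := by
  intro t
  induction t with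
  | zero => intro _; rfl
  | succ t ih =>
    intro hno
    have ihh := ih (fun t' h1 h2 => hno t' h1 (by omega))
    have hB : (Bof A).run G (t + 1) = ((Bof A).run G t).bind ((Bof A).stepOn G.move G.lab) := rfl
    have hA : A.run G (t + 1) = (A.run G t).bind (A.stepOn G.move G.lab) := rfl
    rw [hB, hA, ihh]
    cases hr : A.run G t with
    | none => rfl
    | some c =>
      obtain ⟨q, v⟩ := c
      simp only [Option.map_some, Option.bind_some]
      -- it suffices to relate the two steps
      have key : (Bof A).stepOn G.move G.lab ((if t = 0 then none else some (Sum.inl q)), v) =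
          (A.stepOn G.move G.lab (q, v)).map (fun c => (some (Sum.inl c.1), c.2)) := by
        by_cases ht0 : t = 0
        · subst ht0
          have : (some (A.q0, G.v0) : Option (A.Q × G.V)) = some (q, v) := hr
          injection this with this
          injection this with h1 h2
          subst h1; subst h2
          have hinit : S.isInit (G.lab G.v0) = true := (G.init_iff G.v0).mpr rfl
          have hif : (if (0 : ℕ) = 0 then (none : Option (A.Q ⊕ A.Q))
              else some (Sum.inl A.q0)) = none := if_pos rfl
          erw [hif]
          by_cases hF : A.F A.q0 (G.lab G.v0) = true
          · have hBF : BF A none (G.lab G.v0) = true := by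
              show (S.isInit (G.lab G.v0) && A.F A.q0 (G.lab G.v0)) = true
              rw [hinit, hF]; rfl
            have hAstep : A.stepOn G.move G.lab (A.q0, G.v0) = none := by
              unfold GWA.stepOn; simp [hF]
            have hBstep : (Bof A).stepOn G.move G.lab
                ((none : Option (A.Q ⊕ A.Q)), G.v0) = none := by
              unfold GWA.stepOn; simp [hBF]
            rw [hAstep, hBstep]; rfl
          · unfold GWA.stepOn
            have hBF : BF A none (G.lab G.v0) = false := by
              show (S.isInit (G.lab G.v0) && A.F A.q0 (G.lab G.v0)) = false
              rw [hinit]; simpa using (Bool.eq_false_iff.mpr hF)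
            have hFq : A.F A.q0 (G.lab G.v0) = false := Bool.eq_false_iff.mpr hF
            simp only [Bof_F, hBF, hFq, Bool.false_eq_true, if_false, Bof_δ]
            rw [Bδ_none, if_pos hinit]
            cases hδ : A.δ A.q0 (G.lab G.v0) with
            | none => simp <;> rfl
            | some pd =>
              obtain ⟨p, dir⟩ := pd
              simp only [Option.map_some]
              cases hm : G.move G.v0 dir <;> simp [hm] <;> rfl
        · -- t ≥ 1
          have hif : (if t = 0 then (none : Option (A.Q ⊕ A.Q))
              else some (Sum.inl q)) = some (Sum.inl q) := if_neg ht0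
          erw [hif]
          have hcond : ¬(q = A.q0 ∧ S.isInit (G.lab v) = true) := by
            rintro ⟨rfl, hinit⟩
            have hv : v = G.v0 := (G.init_iff v).mp hinit
            exact hno t (by omega) (by omega) (by rw [hr, hv])
          by_cases hF : A.F q (G.lab v) = true
          · have hBF : BF A (some (Sum.inl q)) (G.lab v) = true := hF
            have hAstep : A.stepOn G.move G.lab (q, v) = none := by
              unfold GWA.stepOn; simp [hF]
            have hBstep : (Bof A).stepOn G.move G.lab (some (Sum.inl q), v) = none := by
              unfold GWA.stepOn; simp [hBF]
            rw [hAstep, hBstep]; rfl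
          · unfold GWA.stepOn
            have hFq : A.F q (G.lab v) = false := Bool.eq_false_iff.mpr hF
            have hBF : BF A (some (Sum.inl q)) (G.lab v) = false := hFq
            simp only [Bof_F, hBF, hFq, Bool.false_eq_true, if_false, Bof_δ]
            rw [Bδ_inl, if_neg hcond]
            cases hδ : A.δ q (G.lab v) with
            | none => simp <;> rfl
            | some pd =>
              obtain ⟨p, dir⟩ := pd
              simp only [Option.map_some]
              cases hm : G.move v dir <;> simp [hm] <;> rfl
      show (Bof A).stepOn G.move G.lab ((if t = 0 then none else some (Sum.inl q)), v) = _
      rw [key]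
      cases hs : A.stepOn G.move G.lab (q, v) <;> simp <;> rfl

/-- If `A` returns to its initial configuration, its run is everywhere defined. -/
lemma run_ne_none_of_loop (A : GWA S) (G : SGraph S) {t' : ℕ} (h1 : 1 ≤ t')
    (h : A.run G t' = some (A.q0, G.v0)) : ∀ s, A.run G s ≠ none := by
  intro s
  induction s using Nat.strong_induction_on with
  | _ s ih =>
    rcases le_or_gt s t' with hle | hlt
    · intro hn
      have := A.runOn_none_mono G.move G.lab (A.q0, G.v0) hle hn
      rw [show A.runOn G.move G.lab (A.q0, G.v0) t' = A.run G t' from rfl, h] at this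
      exact absurd this (by simp)
    · have heq : A.run G s = A.run G (s - t') := by
        have hs : s = t' + (s - t') := by omega
        calc A.run G s = A.run G (t' + (s - t')) := by rw [← hs]
        _ = (A.run G t').bind (fun c => A.runOn G.move G.lab c (s - t')) :=
            A.runOn_add G.move G.lab _ t' (s - t')
        _ = A.run G (s - t') := by rw [h]; rfl
      rw [heq]
      exact ih _ (by omega)

lemma no_accept_of_loop (A : GWA S) (G : SGraph S) {t' : ℕ} (h1 : 1 ≤ t')
    (h : A.run G t' = some (A.q0, G.v0)) : ¬ A.Accepts G := by
  rintro ⟨u, c, hu, hF⟩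
  have hnone : A.run G (u + 1) = none := by
    have : A.run G (u + 1) = (A.run G u).bind (A.stepOn G.move G.lab) := rfl
    rw [this, hu]
    show A.stepOn G.move G.lab c = none
    unfold GWA.stepOn
    simp [hF]
  exact run_ne_none_of_loop A G h1 h (u + 1) hnone

/-- Injectivity of the step function of `Bof A`. -/
lemma Bstep_inj (A : GWA S) (d : A.Q → S.Dir) (hdd : A.DirDet d) (hbd : A.BackDet d)
    (G : SGraph S) {c1 c2 e : (Bof A).Q × G.V}
    (h1 : (Bof A).stepOn G.move G.lab c1 = some e)
    (h2 : (Bof A).stepOn G.move G.lab c2 = some e) : c1 = c2 := by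
  obtain ⟨_, dir1, hδ1, hm1⟩ := stepOn_eq_some h1
  obtain ⟨_, dir2, hδ2, hm2⟩ := stepOn_eq_some h2
  have hdir1 : dir1 = dBof A d e.1 := Bof_dirdet A d hdd _ _ _ _ hδ1
  have hdir2 : dir2 = dBof A d e.1 := Bof_dirdet A d hdd _ _ _ _ hδ2
  subst hdir1; subst hdir2
  have hv1 := G.move_inv _ _ _ hm1
  have hv2 := G.move_inv _ _ _ hm2
  have hv : c1.2 = c2.2 := Option.some.inj (hv1.symm.trans hv2)
  have hs : c1.1 = c2.1 := by
    rw [hv] at hδ1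
    exact Bof_backdet A d hdd hbd _ _ _ _ hδ1 hδ2
  exact Prod.ext hs hv

/-- `Bof A` halts on every finite graph. -/
lemma Bof_halting (A : GWA S) (d : A.Q → S.Dir) (hdd : A.DirDet d) (hbd : A.BackDet d) :
    (Bof A).Halting := by
  intro G
  by_contra hno
  push_neg at hno
  have hsome : ∀ t, ∃ c, (Bof A).run G t = some c := by
    intro t
    cases h : (Bof A).run G t with
    | none => exact absurd h (hno t)
    | some c => exact ⟨c, rfl⟩
  choose f hf using hsome
  have hfin : Finite ((Bof A).Q × G.V) := by
    have := (Bof A).finQ; have := G.fin; infer_instance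
  obtain ⟨t1, t2, hne, hfeq⟩ := Finite.exists_ne_map_eq_of_infinite f
  have key : ∀ a b : ℕ, a < b → f a = f b → False := by
    intro t1 t2 hlt hfeq
    have back : ∀ k, k ≤ t1 → f (t1 - k) = f (t2 - k) := by
      intro k
      induction k with
      | zero => intro _; simpa using hfeq
      | succ k ihk =>
        intro hk
        have hke := ihk (by omega)
        have e1 : t1 - k = (t1 - (k + 1)) + 1 := by omega
        have e2 : t2 - k = (t2 - (k + 1)) + 1 := by omega
        have hs1 : (Bof A).stepOn G.move G.lab (f (t1 - (k + 1))) = some (f (t1 - k)) := by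
          have h1 : (Bof A).run G ((t1 - (k + 1)) + 1) =
              ((Bof A).run G (t1 - (k + 1))).bind ((Bof A).stepOn G.move G.lab) := rfl
          have h2 : (Bof A).run G ((t1 - (k + 1)) + 1) = some (f (t1 - k)) := by
            rw [← e1]; exact hf (t1 - k)
          rw [h1, hf (t1 - (k + 1))] at h2
          simpa using h2
        have hs2 : (Bof A).stepOn G.move G.lab (f (t2 - (k + 1))) = some (f (t1 - k)) := by
          have h1 : (Bof A).run G ((t2 - (k + 1)) + 1) =
              ((Bof A).run G (t2 - (k + 1))).bind ((Bof A).stepOn G.move G.lab) := rfl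
          have h2 : (Bof A).run G ((t2 - (k + 1)) + 1) = some (f (t2 - k)) := by
            rw [← e2]; exact hf (t2 - k)
          rw [h1, hf (t2 - (k + 1))] at h2
          rw [hke]
          simpa using h2
        exact Bstep_inj A d hdd hbd G hs1 hs2
    have h0 : f 0 = f (t2 - t1) := by simpa using back t1 le_rfl
    have hf0 : f 0 = ((none : Option (A.Q ⊕ A.Q)), G.v0) := by
      have h00 : (Bof A).run G 0 = some ((none : Option (A.Q ⊕ A.Q)), G.v0) := rfl
      have := hf 0
      rw [h00] at this
      injection this with this
      exact this.symm
    obtain ⟨k, hk⟩ : ∃ k, t2 - t1 = k + 1 := ⟨t2 - t1 - 1, by omega⟩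
    have he : (Bof A).run G (k + 1) = some ((none : Option (A.Q ⊕ A.Q)), G.v0) := by
      rw [← hk, hf (t2 - t1), ← h0, hf0]; rfl
    have hstep : (Bof A).stepOn G.move G.lab (f k) = some ((none : Option (A.Q ⊕ A.Q)), G.v0) := by
      have h1 : (Bof A).run G (k + 1) =
          ((Bof A).run G k).bind ((Bof A).stepOn G.move G.lab) := rfl
      rw [h1, hf k] at he
      simpa using he
    obtain ⟨_, dir, hδ, _⟩ := stepOn_eq_some hstep
    obtain ⟨q, p', hp, _, _⟩ := Bδ_inv hδ
    exact absurd hp (by simp)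
  rcases hne.lt_or_gt with hlt | hlt
  · exact key t1 t2 hlt hfeq
  · exact key t2 t1 hlt hfeq.symm


lemma Bof_accepts_iff (A : GWA S) (G : SGraph S) :
    (Bof A).Accepts G ↔ A.Accepts G := by
  constructor
  · rintro ⟨t, c, hc, hF⟩
    obtain ⟨q, hq, hcase⟩ := sim_BA A G t c hc
    rcases hcase with ⟨ht0, hc1, rfl⟩ | ⟨ht, hc1⟩
    · refine ⟨t, (A.q0, c.2), hq, ?_⟩
      rw [hc1] at hF
      have hF' : (S.isInit (G.lab c.2) && A.F A.q0 (G.lab c.2)) = true := hF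
      rw [Bool.and_eq_true] at hF'
      exact hF'.2
    · refine ⟨t, (q, c.2), hq, ?_⟩
      rw [hc1] at hF
      exact hF
  · rintro ⟨u, c, hu, hF⟩
    by_cases hcut : ∃ t', 1 ≤ t' ∧ A.run G t' = some (A.q0, G.v0)
    · obtain ⟨t', h1, h2⟩ := hcut
      exact absurd ⟨u, c, hu, hF⟩ (no_accept_of_loop A G h1 h2)
    · push_neg at hcut
      have hsim := sim_AB A G u (fun t' h1 _ => hcut t' h1)
      refine ⟨u, ((if u = 0 then none else some (Sum.inl c.1)), c.2), ?_, ?_⟩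
      · rw [hsim, hu]; rfl
      · by_cases hu0 : u = 0
        · subst hu0
          have : (some (A.q0, G.v0) : Option (A.Q × G.V)) = some c := hu
          injection this with this
          subst this
          show BF A (if 0 = 0 then none else some (Sum.inl A.q0)) (G.lab G.v0) = true
          rw [if_pos rfl]
          show (S.isInit (G.lab G.v0) && A.F A.q0 (G.lab G.v0)) = true
          rw [(G.init_iff G.v0).mpr rfl]
          simpa using hF
        · show BF A (if u = 0 then none else some (Sum.inl c.1)) (G.lab c.2) = true
          rw [if_neg hu0]
          exact hF

end Stmt3Aux2

/-- every n-state direction-determinate GWA with backward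
deterministic transitions has an equivalent halting automaton with 2n+1
states, with reversible transitions and a non-reenterable initial state,
whose computation on every finite graph is finite. -/
theorem stmt3 (S : Signature) (A : GWA S) (n : ℕ) (hn : Nat.card A.Q = n)
    (d : A.Q → S.Dir) (hdd : A.DirDet d) (hbd : A.BackDet d) :
    ∃ B : GWA S, Nat.card B.Q = 2 * n + 1 ∧
      (∃ dB : B.Q → S.Dir, B.DirDet dB ∧ B.BackDet dB) ∧
      (∀ p a c, B.δ p a = some c → c.1 ≠ B.q0) ∧
      B.Halting ∧
      (∀ G : SGraph S, B.Accepts G ↔ A.Accepts G) := by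
  subst hn
  refine ⟨Bof A, ?_,
    ⟨dBof A d, Bof_dirdet A d hdd, Bof_backdet A d hdd hbd⟩, ?_,
    Bof_halting A d hdd hbd, fun G => Bof_accepts_iff A G⟩
  · have := A.finQ
    have : Finite (Option (A.Q ⊕ A.Q)) :=
      Finite.of_equiv _ (Equiv.optionEquivSumPUnit.{0,0} (A.Q ⊕ A.Q)).symm
    show Nat.card (Option (A.Q ⊕ A.Q)) = 2 * Nat.card A.Q + 1
    rw [Finite.card_option, Nat.card_sum]
    ring
  · intro p a c h
    obtain ⟨c1, c2⟩ := c
    obtain ⟨q, p', hp, _, _⟩ := Bδ_inv h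
    rw [hp]
    exact Option.some_ne_none _
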